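/- If V₊ is a J-neutral subspace of a Krein space V (⟨x,x⟩ = 0 for all x ∈ V₊) and V = V₊ ⊕ V₋ with V₋ also J-neutral, then V₊ equals its J-orthogonal complement, i.e. V₊ is hypermaximal J-neutral: x ∈ V with ⟨x,y⟩ = 0 for all y ∈ V₊ implies x ∈ V₊. -/

import Mathlib

/-- Polarization: if the J-form vanishes on the diagonal of a subspace,
it vanishes on all pairs from the subspace. -/
lemma neutral_polarization
    {V : Type*} [NormedAddCommGroup V] [InnerProductSpace ℂ V]
    (J : V →L[ℂ] V) (U : Submodule ℂ V)
    (h : ∀ x ∈ U, (inner ℂ (J x) x : ℂ) = 0) :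
    ∀ x ∈ U, ∀ y ∈ U, (inner ℂ (J x) y : ℂ) = 0 := by
  intro x hx y hy
  have h1 := h (x + y) (U.add_mem hx hy)
  have h2 := h (x + (Complex.I : ℂ) • y) (U.add_mem hx (U.smul_mem _ hy))
  simp only [map_add, map_smul, inner_add_left, inner_add_right, inner_smul_left,
    inner_smul_right, h x hx, h y hy, Complex.conj_I, RingHom.map_mul] at h1 h2
  -- h1 : inner (J x) y + inner (J y) x = 0
  -- h2 : I * inner (J x) y - I * inner (J y) x = 0 (roughly)
  set a := (inner ℂ (J x) y : ℂ)
  set b := (inner ℂ (J y) x : ℂ)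
  have hI : (Complex.I : ℂ) ≠ 0 := Complex.I_ne_zero
  have h3 : Complex.I * (a - b) = 0 := by linear_combination h2
  have h4 : a - b = 0 := by
    rcases mul_eq_zero.mp h3 with h | h
    · exact absurd h hI
    · exact h
  linear_combination h1 / 2 + h4 / 2

/-- if `V = V₊ ⊕ V₋` with both `V₊` and `V₋` `J`-neutral subspaces of a
Krein space `(V, ⟨x,y⟩ = (Jx|y))`, then `V₊` equals its `J`-orthogonal complement,
i.e. `V₊` is hypermaximal `J`-neutral. -/
theorem neutral_complement_hypermaximal
    {V : Type*} [NormedAddCommGroup V] [InnerProductSpace ℂ V] [CompleteSpace V]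
    (J : V →L[ℂ] V)
    (hJinv : ∀ x : V, J (J x) = x)
    (hJsa : ∀ x y : V, (inner ℂ (J x) y : ℂ) = inner ℂ x (J y))
    (Vp Vm : Submodule ℂ V) (hVp : IsClosed (Vp : Set V)) (hVm : IsClosed (Vm : Set V))
    (hcompl : IsCompl Vp Vm)
    (hneutp : ∀ x ∈ Vp, (inner ℂ (J x) x : ℂ) = 0)
    (hneutm : ∀ x ∈ Vm, (inner ℂ (J x) x : ℂ) = 0) :
    {x : V | ∀ y ∈ Vp, (inner ℂ (J x) y : ℂ) = 0} = (Vp : Set V) := by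
  have polp := neutral_polarization J Vp hneutp
  have polm := neutral_polarization J Vm hneutm
  ext x
  simp only [Set.mem_setOf_eq, SetLike.mem_coe]
  constructor
  · intro hx
    obtain ⟨p, hp, m, hm, hpm⟩ := Submodule.mem_sup.mp
      (by rw [hcompl.sup_eq_top]; trivial : x ∈ Vp ⊔ Vm)
    have hmz : ∀ y ∈ Vp, (inner ℂ (J m) y : ℂ) = 0 := by
      intro y hy
      have : (inner ℂ (J (p + m)) y : ℂ) = 0 := by rw [hpm]; exact hx y hy
      simpa [inner_add_left, polp p hp y hy] using this
    have hJm : J m = 0 := by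
      apply ext_inner_right ℂ
      intro v
      obtain ⟨q, hq, r, hr, hqr⟩ := Submodule.mem_sup.mp
        (by rw [hcompl.sup_eq_top]; trivial : v ∈ Vp ⊔ Vm)
      rw [← hqr]
      simp [inner_add_right, hmz q hq, polm m hm r hr]
    have : m = 0 := by rw [← hJinv m, hJm, map_zero]
    rw [← hpm, this, add_zero]; exact hp
  · intro hx y hy
    exact polp x hx y hy
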